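/- Let D be a dense countably infinite mesh in I^n and fix an integer k with 1 ≤ k ≤ n. Let A, B : D → I be functions with A ≤ B and L_k^{(A,B)}(DU) ≥ 0 for all DU ∈ R_k(D). Fix a point x ∈ D and define A' : D → I by A'(u) = A(u) for u ≠ x and A'(x) = A(x) + γ_{k,D}^{(A,B)}(x). Then A ≤ A' ≤ B, L_k^{(A',B)}(DU) ≥ 0 for all DU ∈ R_k(D), and γ_{k,D}^{(A',B)}(x) = 0. -/

import Mathlib

open scoped Classical BigOperators

namespace KIncr

/-- Points of the ambient space `ℝ^n`. -/
abbrev Pt (n : ℕ) := Fin n → ℝ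

/-- Membership in the unit cube `I^n = [0,1]^n`. -/
def inCube {n : ℕ} (x : Pt n) : Prop := ∀ i, x i ∈ Set.Icc (0:ℝ) 1

/-- The unit cube as a set. -/
def cubeSet (n : ℕ) : Set (Pt n) := {x | inCube x}

/-- Vertices of the unit cube `I^n`. -/
def isCubeVertex {n : ℕ} (x : Pt n) : Prop := ∀ i, x i = 0 ∨ x i = 1

/-- A (formal) box, given by its lower-left and upper-right corners. -/
structure Box (n : ℕ) where
  lo : Pt n
  hi : Pt n

/-- `R` is a `k`-box in `I^n`: exactly `k` coordinates are nondegenerate. -/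
def Box.IsKBox {n : ℕ} (k : ℕ) (R : Box n) : Prop :=
  inCube R.lo ∧ inCube R.hi ∧ (∀ i, R.lo i ≤ R.hi i) ∧
    (Finset.univ.filter (fun i => R.lo i < R.hi i)).card = k

/-- `v` is a vertex of the box `R`. -/
def Box.IsVertex {n : ℕ} (R : Box n) (v : Pt n) : Prop :=
  ∀ i, v i = R.lo i ∨ v i = R.hi i

/-- The (finite) set of vertices of a box. -/
noncomputable def Box.vertices {n : ℕ} (R : Box n) : Finset (Pt n) :=
  Finset.image (fun ε : Fin n → Bool => fun i => if ε i then R.hi i else R.lo i)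
    Finset.univ

/-- The sign `(-1)^(m-(n-k))` of a vertex `v` of a `k`-box, where
`m = #{i : v i = lo i}`;  since `m ≥ n - k`, this equals `(-1)^(m+(n-k))`. -/
noncomputable def Box.sign {n : ℕ} (k : ℕ) (R : Box n) (v : Pt n) : ℤ :=
  (-1) ^ ((Finset.univ.filter (fun i => v i = R.lo i)).card + (n - k))

/-- The multiplicity `m_R(u)` of a point `u` with respect to a `k`-box `R`. -/
noncomputable def Box.mult {n : ℕ} (k : ℕ) (R : Box n) (u : Pt n) : ℤ :=
  if R.IsVertex u then R.sign k u else 0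

/-- `V_{A,k}(R) = ∑_{v ∈ ver R} sign_R(v) · A(v)`. -/
noncomputable def Vvol {n : ℕ} (k : ℕ) (A : Pt n → ℝ) (R : Box n) : ℝ :=
  ∑ v ∈ R.vertices, (R.sign k v : ℝ) * A v

/-- A function is `k`-increasing on `D` if `V_{A,k}(R) ≥ 0` for every `k`-box
with all vertices in `D`. -/
def KIncreasingOn {n : ℕ} (k : ℕ) (D : Set (Pt n)) (A : Pt n → ℝ) : Prop :=
  ∀ R : Box n, R.IsKBox k → (∀ v ∈ R.vertices, v ∈ D) → 0 ≤ Vvol k A R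

/-- The multiplicity `m_DU(u)` of a point with respect to a formal (multiset)
disjoint union of `k`-boxes. -/
noncomputable def multDU {n : ℕ} (k : ℕ) (DU : Multiset (Box n)) (u : Pt n) : ℤ :=
  (DU.map (fun R => R.mult k u)).sum

/-- `DU ∈ R_k(D)`: every box of the multiset `DU` is a `k`-box with all its
vertices in `D`. -/
def memRk {n : ℕ} (k : ℕ) (D : Set (Pt n)) (DU : Multiset (Box n)) : Prop :=
  ∀ R ∈ DU, R.IsKBox k ∧ ∀ v ∈ R.vertices, v ∈ D

/-- `L_k^{(A,B)}(DU) = ∑_{m_DU(u)>0} m_DU(u)·B(u) + ∑_{m_DU(u)<0} m_DU(u)·A(u)`. -/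
noncomputable def Lk {n : ℕ} (k : ℕ) (A B : Pt n → ℝ) (DU : Multiset (Box n)) : ℝ :=
  ∑ u ∈ DU.toFinset.biUnion Box.vertices,
    (if 0 < multDU k DU u then (multDU k DU u : ℝ) * B u
     else if multDU k DU u < 0 then (multDU k DU u : ℝ) * A u else 0)

/-- `P⁻_{k,D}^{(A,B)}(x)`, with the Mathlib convention `sInf ∅ = 0`. -/
noncomputable def Pneg {n : ℕ} (k : ℕ) (D : Set (Pt n)) (A B : Pt n → ℝ) (x : Pt n) : ℝ :=
  sInf {r : ℝ | ∃ DU : Multiset (Box n), memRk k D DU ∧ multDU k DU x < 0 ∧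
    r = Lk k A B DU / |(multDU k DU x : ℝ)|}

/-- `P⁺_{k,D}^{(A,B)}(x)`, with the Mathlib convention `sInf ∅ = 0`. -/
noncomputable def Ppos {n : ℕ} (k : ℕ) (D : Set (Pt n)) (A B : Pt n → ℝ) (x : Pt n) : ℝ :=
  sInf {r : ℝ | ∃ DU : Multiset (Box n), memRk k D DU ∧ 0 < multDU k DU x ∧
    r = Lk k A B DU / |(multDU k DU x : ℝ)|}

/-- `γ_{k,D}^{(A,B)}(x) = min {P⁻_{k,D}^{(A,B)}(x), B(x) - A(x)}`. -/
noncomputable def gammaK {n : ℕ} (k : ℕ) (D : Set (Pt n)) (A B : Pt n → ℝ) (x : Pt n) : ℝ :=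
  min (Pneg k D A B x) (B x - A x)

/-- `δ_{k,D}^{(A,B)}(x) = min {P⁺_{k,D}^{(A,B)}(x), B(x) - A(x)}`. -/
noncomputable def deltaK {n : ℕ} (k : ℕ) (D : Set (Pt n)) (A B : Pt n → ℝ) (x : Pt n) : ℝ :=
  min (Ppos k D A B x) (B x - A x)

/-- A dense countably infinite mesh `D = ∏ δᵢ` in `I^n`. -/
def IsMesh {n : ℕ} (D : Set (Pt n)) : Prop :=
  ∃ δ : Fin n → Set ℝ,
    (∀ i, δ i ⊆ Set.Icc (0:ℝ) 1 ∧ (δ i).Countable ∧ (δ i).Infinite ∧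
      Set.Icc (0:ℝ) 1 ⊆ closure (δ i) ∧ (0:ℝ) ∈ δ i ∧ (1:ℝ) ∈ δ i) ∧
    D = {x : Pt n | ∀ i, x i ∈ δ i}

/-- `A` is grounded: it vanishes whenever some coordinate is `0`. -/
def Grounded {n : ℕ} (A : Pt n → ℝ) : Prop :=
  ∀ x : Pt n, inCube x → (∃ i, x i = 0) → A x = 0

/-- `A` is 1-increasing (increasing in each variable). -/
def OneIncreasing {n : ℕ} (A : Pt n → ℝ) : Prop :=
  ∀ x y : Pt n, inCube x → inCube y → (∀ i, x i ≤ y i) → A x ≤ A y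

/-- `A` has uniform marginals. -/
def UniformMarginals {n : ℕ} (A : Pt n → ℝ) : Prop :=
  ∀ i : Fin n, ∀ t ∈ Set.Icc (0:ℝ) 1, A (Function.update (fun _ => (1:ℝ)) i t) = t

/-- `A` is a standardized function. -/
def Standardized {n : ℕ} (A : Pt n → ℝ) : Prop :=
  Grounded A ∧ OneIncreasing A ∧ A (fun _ => (1:ℝ)) = 1

/-- `A` is a semicopula. -/
def Semicopula {n : ℕ} (A : Pt n → ℝ) : Prop :=
  Grounded A ∧ OneIncreasing A ∧ UniformMarginals A

/-- `A` maps the unit cube into `I = [0,1]`. -/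
def MapsToI {n : ℕ} (A : Pt n → ℝ) : Prop :=
  ∀ x : Pt n, inCube x → A x ∈ Set.Icc (0:ℝ) 1

/-- Condition S: all discontinuities of all sections of `A` lie in the
countable set `S`. -/
def CondS {n : ℕ} (A : Pt n → ℝ) (S : Set ℝ) : Prop :=
  ∀ u : Pt n, inCube u → ∀ i : Fin n, ∀ t ∈ Set.Icc (0:ℝ) 1, t ∉ S →
    ContinuousWithinAt (fun s => A (Function.update u i s)) (Set.Icc (0:ℝ) 1) t

/-- A quasi-copula: a semicopula that is 1-Lipschitz w.r.t. the ℓ¹-norm. -/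
def QuasiCopula {n : ℕ} (A : Pt n → ℝ) : Prop :=
  Semicopula A ∧ ∀ x y : Pt n, inCube x → inCube y → |A x - A y| ≤ ∑ i, |x i - y i|

end KIncr

open KIncr

lemma aux_mem_vertices_of_isVertex {n : ℕ} (R : Box n) (v : Pt n)
    (h : R.IsVertex v) : v ∈ R.vertices := by
  classical
  simp only [Box.vertices, Finset.mem_image, Finset.mem_univ, true_and]
  refine ⟨fun i => if v i = R.lo i then false else true, ?_⟩
  funext i
  show (if (if v i = R.lo i then false else true) = true then R.hi i else R.lo i) = v i
  by_cases hv : v i = R.lo i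
  · rw [if_pos hv]
    simp [hv]
  · have h2 := (h i).resolve_left hv
    rw [if_neg hv]
    simp [h2]

lemma aux_multDU_mem_biUnion {n k : ℕ} {DU : Multiset (Box n)} {u : Pt n}
    (h : multDU k DU u ≠ 0) : u ∈ DU.toFinset.biUnion Box.vertices := by
  classical
  by_contra hu
  apply h
  unfold multDU
  apply Multiset.sum_eq_zero
  intro z hz
  obtain ⟨R, hR, rfl⟩ := Multiset.mem_map.1 hz
  unfold Box.mult
  rw [if_neg]
  intro hv
  exact hu (Finset.mem_biUnion.2
    ⟨R, Multiset.mem_toFinset.2 hR, aux_mem_vertices_of_isVertex R u hv⟩)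

lemma aux_Lk_update {n : ℕ} (k : ℕ) (A B : Pt n → ℝ) (x : Pt n) (γ : ℝ)
    (DU : Multiset (Box n)) :
    Lk k (fun u => if u = x then A x + γ else A u) B DU
      = Lk k A B DU + (if multDU k DU x < 0 then (multDU k DU x : ℝ) * γ else 0) := by
  classical
  unfold Lk
  by_cases hx : x ∈ DU.toFinset.biUnion Box.vertices
  · rw [← Finset.add_sum_erase _ _ hx, ← Finset.add_sum_erase _ _ hx]
    have hsum : ∀ u ∈ (DU.toFinset.biUnion Box.vertices).erase x,
        (if 0 < multDU k DU u then (multDU k DU u : ℝ) * B u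
         else if multDU k DU u < 0 then
           (multDU k DU u : ℝ) * ((fun u => if u = x then A x + γ else A u) u) else 0)
        = (if 0 < multDU k DU u then (multDU k DU u : ℝ) * B u
         else if multDU k DU u < 0 then (multDU k DU u : ℝ) * A u else 0) := by
      intro u hu
      have hux : u ≠ x := Finset.ne_of_mem_erase hu
      simp only [hux, if_false]
    rw [Finset.sum_congr rfl hsum]
    have hxterm :
        (if 0 < multDU k DU x then (multDU k DU x : ℝ) * B x
         else if multDU k DU x < 0 then
           (multDU k DU x : ℝ) * ((fun u => if u = x then A x + γ else A u) x) else 0)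
        = (if 0 < multDU k DU x then (multDU k DU x : ℝ) * B x
           else if multDU k DU x < 0 then (multDU k DU x : ℝ) * A x else 0)
          + (if multDU k DU x < 0 then (multDU k DU x : ℝ) * γ else 0) := by
      simp only [if_pos rfl]
      rcases lt_trichotomy (multDU k DU x) 0 with h | h | h
      · have h' : ¬ 0 < multDU k DU x := not_lt.2 h.le
        simp only [h', if_false, h, if_true]
        push_cast
        ring
      · simp [h]
      · simp [h, not_lt.2 h.le]
    rw [hxterm]
    ring
  · have hm0 : multDU k DU x = 0 := by
      by_contra h
      exact hx (aux_multDU_mem_biUnion h)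
    rw [hm0]
    simp only [lt_irrefl, if_false, add_zero]
    apply Finset.sum_congr rfl
    intro u hu
    have hux : u ≠ x := fun h => hx (h ▸ hu)
    simp only [hux, if_false]

lemma aux_Pneg_nonneg {n : ℕ} (k : ℕ) (D : Set (Pt n)) (A B : Pt n → ℝ)
    (hL : ∀ DU : Multiset (Box n), memRk k D DU → 0 ≤ Lk k A B DU) (x : Pt n) :
    0 ≤ Pneg k D A B x := by
  apply Real.sInf_nonneg
  rintro r ⟨DU, hDU, hm, rfl⟩
  exact div_nonneg (hL DU hDU) (abs_nonneg _)

lemma aux_Pneg_le {n : ℕ} {k : ℕ} {D : Set (Pt n)} {A B : Pt n → ℝ}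
    (hL : ∀ DU : Multiset (Box n), memRk k D DU → 0 ≤ Lk k A B DU)
    {x : Pt n} {DU : Multiset (Box n)} (hDU : memRk k D DU)
    (hm : multDU k DU x < 0) :
    Pneg k D A B x ≤ Lk k A B DU / |(multDU k DU x : ℝ)| := by
  apply csInf_le
  · refine ⟨0, ?_⟩
    rintro r ⟨DU', h1, h2, rfl⟩
    exact div_nonneg (hL DU' h1) (abs_nonneg _)
  · exact ⟨DU, hDU, hm, rfl⟩

/-- Proposition 4.1: raising `A` at a single point of a mesh. -/
theorem stmt5 (n k : ℕ) (hn : 1 ≤ n) (hk1 : 1 ≤ k) (hkn : k ≤ n)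
    (D : Set (Pt n)) (hD : IsMesh D) (A B : Pt n → ℝ)
    (hAI : ∀ u ∈ D, A u ∈ Set.Icc (0:ℝ) 1) (hBI : ∀ u ∈ D, B u ∈ Set.Icc (0:ℝ) 1)
    (hAB : ∀ u ∈ D, A u ≤ B u)
    (hL : ∀ DU : Multiset (Box n), memRk k D DU → 0 ≤ Lk k A B DU)
    (x : Pt n) (hx : x ∈ D) (A' : Pt n → ℝ)
    (hA' : ∀ u : Pt n, A' u = if u = x then A x + gammaK k D A B x else A u) :
    (∀ u ∈ D, A u ≤ A' u ∧ A' u ≤ B u) ∧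
    (∀ DU : Multiset (Box n), memRk k D DU → 0 ≤ Lk k A' B DU) ∧
    gammaK k D A' B x = 0 := by
  classical
  set γ : ℝ := gammaK k D A B x with hγdef
  have hAe : A' = fun u => if u = x then A x + γ else A u := funext hA'
  have hBA : 0 ≤ B x - A x := sub_nonneg.2 (hAB x hx)
  have hγle : γ ≤ B x - A x := min_le_right _ _
  have hγPneg : γ ≤ Pneg k D A B x := min_le_left _ _
  have hγ0 : 0 ≤ γ := le_min (aux_Pneg_nonneg k D A B hL x) hBA
  -- Part 2 first
  have hL' : ∀ DU : Multiset (Box n), memRk k D DU → 0 ≤ Lk k A' B DU := by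
    intro DU hDU
    rw [hAe, aux_Lk_update]
    by_cases hm : multDU k DU x < 0
    · rw [if_pos hm]
      have h1 : γ ≤ Lk k A B DU / |(multDU k DU x : ℝ)| :=
        hγPneg.trans (aux_Pneg_le hL hDU hm)
      have hm' : (0:ℝ) < |(multDU k DU x : ℝ)| := by
        rw [abs_pos]
        exact_mod_cast hm.ne
      have h2 : γ * |(multDU k DU x : ℝ)| ≤ Lk k A B DU :=
        (le_div_iff₀ hm').1 h1
      have habs : |(multDU k DU x : ℝ)| = -(multDU k DU x : ℝ) := by
        apply abs_of_neg
        exact_mod_cast hm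
      nlinarith [h2, habs]
    · rw [if_neg hm, add_zero]
      exact hL DU hDU
  refine ⟨?_, hL', ?_⟩
  · intro u hu
    rw [hA' u]
    by_cases huz : u = x
    · subst huz
      rw [if_pos rfl]
      constructor
      · linarith
      · linarith
    · rw [if_neg huz]
      exact ⟨le_refl _, hAB u hu⟩
  -- Part 3
  · have hA'x : A' x = A x + γ := by rw [hA' x, if_pos rfl]
    -- ratio relation
    have hratio : ∀ DU : Multiset (Box n), multDU k DU x < 0 →
        Lk k A' B DU / |(multDU k DU x : ℝ)|
          = Lk k A B DU / |(multDU k DU x : ℝ)| - γ := by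
      intro DU hm
      rw [hAe, aux_Lk_update, if_pos hm]
      have habs : |(multDU k DU x : ℝ)| = -(multDU k DU x : ℝ) := by
        apply abs_of_neg
        exact_mod_cast hm
      have hmne : (multDU k DU x : ℝ) ≠ 0 := by exact_mod_cast hm.ne
      have hne2 : -(multDU k DU x : ℝ) ≠ 0 := neg_ne_zero.2 hmne
      rw [habs]
      field_simp
      ring
    set S : Set ℝ := {r : ℝ | ∃ DU : Multiset (Box n), memRk k D DU ∧
        multDU k DU x < 0 ∧ r = Lk k A B DU / |(multDU k DU x : ℝ)|} with hSdef
    have hS' : {r : ℝ | ∃ DU : Multiset (Box n), memRk k D DU ∧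
        multDU k DU x < 0 ∧ r = Lk k A' B DU / |(multDU k DU x : ℝ)|}
        = (fun r => r - γ) '' S := by
      ext r
      constructor
      · rintro ⟨DU, h1, h2, rfl⟩
        exact ⟨Lk k A B DU / |(multDU k DU x : ℝ)|, ⟨DU, h1, h2, rfl⟩, (hratio DU h2).symm⟩
      · rintro ⟨s, ⟨DU, h1, h2, rfl⟩, rfl⟩
        exact ⟨DU, h1, h2, (hratio DU h2).symm⟩
    have hPneg' : Pneg k D A' B x = Pneg k D A B x - γ ∨
        (S = ∅ ∧ Pneg k D A' B x = 0 ∧ Pneg k D A B x = 0) := by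
      by_cases hne : S.Nonempty
      · left
        have hbdS : BddBelow S := by
          refine ⟨0, ?_⟩
          rintro r ⟨DU, h1, h2, rfl⟩
          exact div_nonneg (hL DU h1) (abs_nonneg _)
        have hbdS' : BddBelow ((fun r => r - γ) '' S) := by
          refine ⟨-γ, ?_⟩
          rintro r ⟨s, hs, rfl⟩
          have h0s : (0:ℝ) ≤ s := by
            obtain ⟨DU, h1, h2, rfl⟩ := hs
            exact div_nonneg (hL DU h1) (abs_nonneg _)
          simp only
          linarith
        have key : sInf ((fun r => r - γ) '' S) = sInf S - γ := by
          apply le_antisymm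
          · have h2 : ∀ s ∈ S, sInf ((fun r => r - γ) '' S) ≤ s - γ := by
              intro s hs
              exact csInf_le hbdS' ⟨s, hs, rfl⟩
            have h3 : sInf ((fun r => r - γ) '' S) + γ ≤ sInf S := by
              apply le_csInf hne
              intro s hs
              linarith [h2 s hs]
            linarith
          · apply le_csInf (hne.image _)
            rintro r ⟨s, hs, rfl⟩
            have := csInf_le hbdS hs
            simp only
            linarith
        rw [Pneg, hS', key]
        rfl
      · right
        have hSe : S = ∅ := Set.not_nonempty_iff_eq_empty.1 hne
        refine ⟨hSe, ?_, ?_⟩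
        · rw [Pneg, hS', hSe]
          simp [Real.sInf_empty]
        · rw [Pneg, ← hSdef, hSe]
          exact Real.sInf_empty
    have hPneg'nonneg : 0 ≤ Pneg k D A' B x := aux_Pneg_nonneg k D A' B hL' x
    have hBA' : 0 ≤ B x - A' x := by
      rw [hA'x]; linarith
    rcases hPneg' with h | ⟨hSe, h1, h2⟩
    · rw [gammaK, hA'x, h]
      by_cases hc : Pneg k D A B x ≤ B x - A x
      · have hγeq : γ = Pneg k D A B x := min_eq_left hc
        have h1 : Pneg k D A B x - γ = 0 := by rw [hγeq]; ring
        have h2 : 0 ≤ B x - (A x + γ) := by linarith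
        rw [h1, min_eq_left h2]
      · have hγeq : γ = B x - A x := min_eq_right (le_of_not_ge hc)
        have hmin2 : B x - (A x + γ) = 0 := by rw [hγeq]; ring
        have h2 : 0 ≤ Pneg k D A B x - γ := by linarith
        rw [hmin2, min_eq_right h2]
    · -- empty case: γ = min 0 (B x - A x) = 0
      have hγ0' : γ = 0 := by
        have : Pneg k D A B x = 0 := h2
        rw [hγdef, gammaK, this]
        exact min_eq_left hBA
      rw [gammaK, h1, hA'x, hγ0']
      rw [min_eq_left]
      linarith
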